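/- If the truncated mean function ℓ(x) = ∫₀ˣ (1 - F(t)) dt of a nonnegative random variable X with distribution function F is slowly varying at infinity and E[X] = ∞, then x(1 - F(x)) = o(ℓ(x)) as x → ∞. -/
import Mathlib


open MeasureTheory Filter Set Asymptotics Topology

/-- Tail of a distribution: `P[X > x]`. -/
noncomputable def tailF (μ : Measure ℝ) (x : ℝ) : ℝ := (μ (Set.Ioi x)).toReal

/-- Truncated mean `ℓ(x) = ∫₀ˣ (1 - F(t)) dt`. -/
noncomputable def ell (μ : Measure ℝ) (x : ℝ) : ℝ := ∫ t in (0:ℝ)..x, tailF μ t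

/-- A function is slowly varying at infinity. -/
def SlowlyVarying (f : ℝ → ℝ) : Prop :=
  (∀ᶠ x in atTop, 0 < f x) ∧
    ∀ c : ℝ, 1 < c → Tendsto (fun x => f (c * x) / f x) atTop (𝓝 1)

/-- If `ℓ(x) = ∫₀ˣ (1-F(t)) dt` is slowly varying and `E X = ∞` for a nonnegative
variable, then `x (1 - F(x)) = o(ℓ(x))` as `x → ∞`. -/
theorem stmt0 (μ : Measure ℝ) [IsProbabilityMeasure μ]
    (hnn : μ (Set.Iio 0) = 0)
    (hmean : ∫⁻ x, ENNReal.ofReal |x| ∂μ = ⊤)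
    (hsv : SlowlyVarying (ell μ)) :
    (fun x => x * tailF μ x) =o[atTop] ell μ := by
  have htail_anti : Antitone (tailF μ) := by
    intro a b hab
    exact ENNReal.toReal_mono (measure_ne_top μ _) (measure_mono (Set.Ioi_subset_Ioi hab))
  have htail_nonneg : ∀ x, 0 ≤ tailF μ x := fun x => ENNReal.toReal_nonneg
  have hint : ∀ a b : ℝ, IntervalIntegrable (tailF μ) volume a b := fun a b =>
    htail_anti.intervalIntegrable
  -- key pointwise bound
  have key : ∀ x : ℝ, 0 ≤ x → (x / 2) * tailF μ x ≤ ell μ x - ell μ (x / 2) := by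
    intro x hx
    have h1 : ell μ x - ell μ (x / 2) = ∫ t in (x/2)..x, tailF μ t := by
      rw [ell, ell,
        ← intervalIntegral.integral_interval_sub_left (hint 0 x) (hint 0 (x/2))]
    have h2 : ∫ t in (x/2)..x, tailF μ x ≤ ∫ t in (x/2)..x, tailF μ t := by
      apply intervalIntegral.integral_mono_on (by linarith) intervalIntegrable_const (hint _ _)
      intro t ht
      exact htail_anti ht.2
    have h3 : (∫ t in (x/2)..x, tailF μ x) = (x / 2) * tailF μ x := by
      rw [intervalIntegral.integral_const, smul_eq_mul]
      ring
    rw [h1, ← h3]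
    exact h2
  -- ratio ℓ(x/2)/ℓ(x) → 1
  obtain ⟨A, hA⟩ := eventually_atTop.mp hsv.1
  have h2x : Tendsto (fun x => ell μ x / ell μ (x / 2)) atTop (𝓝 1) := by
    have := (hsv.2 2 one_lt_two).comp (tendsto_id.atTop_div_const two_pos)
    refine this.congr (fun x => ?_)
    simp [Function.comp]
    ring_nf
  have hratio : Tendsto (fun x => ell μ (x / 2) / ell μ x) atTop (𝓝 1) := by
    have hinv : Tendsto (fun x => (ell μ x / ell μ (x / 2))⁻¹) atTop (𝓝 1) := by
      simpa using h2x.inv₀ one_ne_zero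
    refine hinv.congr' ?_
    have h1 : ∀ᶠ x in atTop, A ≤ x := eventually_ge_atTop A
    have h2 : ∀ᶠ x in atTop, A ≤ x / 2 := (tendsto_id.atTop_div_const two_pos).eventually_ge_atTop A
    filter_upwards [h1, h2] with x hx hx2
    rw [inv_div]
  have hg : Tendsto (fun x => 2 * (1 - ell μ (x / 2) / ell μ x)) atTop (𝓝 0) := by
    have : Tendsto (fun x => 2 * (1 - ell μ (x / 2) / ell μ x)) atTop (𝓝 (2 * (1 - 1))) :=
      (tendsto_const_nhds.sub hratio).const_mul 2
    simpa using this
  have hsqueeze : Tendsto (fun x => x * tailF μ x / ell μ x) atTop (𝓝 0) := by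
    apply tendsto_of_tendsto_of_tendsto_of_le_of_le' tendsto_const_nhds hg
    · filter_upwards [eventually_ge_atTop A, eventually_ge_atTop (0:ℝ)] with x hx hx0
      exact div_nonneg (mul_nonneg hx0 (htail_nonneg x)) (hA x hx).le
    · filter_upwards [eventually_ge_atTop A,
        (tendsto_id.atTop_div_const two_pos).eventually_ge_atTop A,
        eventually_ge_atTop (0:ℝ)] with x hx hx2 hx0
      have hpos := hA x hx
      have hc : ell μ (x / 2) / ell μ x * ell μ x = ell μ (x / 2) :=
        div_mul_cancel₀ _ hpos.ne'
      rw [div_le_iff₀ hpos]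
      have hk := key x hx0
      nlinarith [hk, hc]
  rw [isLittleO_iff_tendsto']
  · exact hsqueeze
  · filter_upwards [eventually_ge_atTop A] with x hx h0
    exact absurd h0 (hA x hx).ne'
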